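/- Let f(t) ∈ tℂ[[t]] be a power series with zero constant term and let F(x,y) ∈ ℂ[x,y] be a polynomial not divisible by x such that F(t, f(t)) = 0. Then F(1/z, y), viewed as a polynomial in y over ℂ((1/z)), has exactly one root of strictly negative valuation in the field of Newton–Puiseux series if and only if ∂F/∂y(0,0) ≠ 0. -/

import Mathlib

open Polynomial

section VAux

variable {K : Type*} [Field K] (v : K → WithBot ℚ)
  (hv0 : ∀ x, v x = ⊥ ↔ x = 0) (hvmul : ∀ x y, v (x * y) = v x + v y)
  (hvadd : ∀ x y, v (x + y) ≤ max (v x) (v y))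

include hv0 hvmul in
theorem vaux_one : v 1 = 0 := by
  have h := hvmul 1 1
  rw [mul_one] at h
  have hne : v 1 ≠ ⊥ := by simp [hv0]
  lift v 1 to ℚ using hne with a ha
  have : (a : WithBot ℚ) = a + a := h
  exact_mod_cast by
    have : a = a + a := by exact_mod_cast this
    linarith

include hv0 hvmul in
theorem vaux_neg (x : K) : v (-x) = v x := by
  have h1 : v (-1 : K) = 0 := by
    have h := hvmul (-1) (-1)
    rw [neg_mul_neg, one_mul, vaux_one v hv0 hvmul] at h
    have hne : v (-1 : K) ≠ ⊥ := by simp [hv0]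
    lift v (-1 : K) to ℚ using hne with a ha
    have : (0 : ℚ) = a + a := by exact_mod_cast h
    exact_mod_cast by linarith
  calc v (-x) = v ((-1) * x) := by rw [neg_one_mul]
  _ = v (-1) + v x := hvmul _ _
  _ = v x := by rw [h1, zero_add]

include hv0 hvmul hvadd in
theorem vaux_add_eq {x y : K} (h : v y < v x) : v (x + y) = v x := by
  refine le_antisymm ((hvadd x y).trans (by simp [le_of_lt h])) ?_
  by_contra hlt
  push_neg at hlt
  have : v x ≤ max (v (x + y)) (v y) := by
    have := hvadd (x + y) (-y)
    rw [add_neg_cancel_right, vaux_neg v hv0 hvmul] at this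
    exact this
  rcases le_max_iff.mp this with h' | h'
  · exact absurd (h'.trans_lt hlt) (lt_irrefl _)
  · exact absurd (h'.trans_lt h) (lt_irrefl _)

include hv0 hvmul hvadd in
theorem vaux_sub_eq {x y : K} (h : v y < v x) : v (x - y) = v x := by
  rw [sub_eq_add_neg]
  exact vaux_add_eq v hv0 hvmul hvadd (by rwa [vaux_neg v hv0 hvmul])

include hv0 hvmul hvadd in
theorem vaux_sub_le (x y : K) : v (x - y) ≤ max (v x) (v y) := by
  rw [sub_eq_add_neg]
  simpa [vaux_neg v hv0 hvmul] using hvadd x (-y)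

include hv0 hvmul in
theorem vaux_prod (t : Multiset K) : v t.prod = (t.map v).sum := by
  induction t using Multiset.induction_on with
  | empty => simpa using vaux_one v hv0 hvmul
  | cons a t ih => simp [hvmul, ih]

end VAux

theorem wbq_sum_nonneg (u : Multiset (WithBot ℚ)) (h : ∀ x ∈ u, 0 ≤ x) : 0 ≤ u.sum := by
  induction u using Multiset.induction_on with
  | empty => simp
  | cons a t ih =>
    rw [Multiset.sum_cons]
    calc (0 : WithBot ℚ) = 0 + 0 := by simp
    _ ≤ a + t.sum := add_le_add (h a (Multiset.mem_cons_self a t)) (ih fun x hx => h x (Multiset.mem_cons_of_mem hx))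

theorem coeff_X_sub_C_mul {K : Type*} [Field K] (a : K) (p : Polynomial K) (k : ℕ) :
    ((X - C a) * p).coeff k = (if k = 0 then 0 else p.coeff (k - 1)) - a * p.coeff k := by
  rw [sub_mul]
  cases k with
  | zero => simp [mul_coeff_zero]
  | succ n => simp [coeff_X_mul, coeff_C_mul]

theorem coeff_zero_W {K : Type*} [Field K] (t : Multiset K) :
    ((t.map fun a => X - C a).prod).coeff 0 = (t.map fun a => -a).prod := by
  induction t using Multiset.induction_on with
  | empty => simp
  | cons a t ih => simp [mul_coeff_zero, ih]


section VAux2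
variable {K : Type*} [Field K] (v : K → WithBot ℚ)
  (hv0 : ∀ x, v x = ⊥ ↔ x = 0) (hvmul : ∀ x y, v (x * y) = v x + v y)
  (hvadd : ∀ x y, v (x + y) ≤ max (v x) (v y))


include hv0 hvmul hvadd in
theorem vaux_coeff_prod_le (t : Multiset K) (ht : ∀ a ∈ t, 0 ≤ v a) (k : ℕ) :
    v (((t.map fun a => X - C a).prod).coeff k) ≤ (t.map v).sum := by
  induction t using Multiset.induction_on generalizing k with
  | empty =>
    cases k with
    | zero => simp [vaux_one v hv0 hvmul]
    | succ n =>
      have hbot : v (0:K) = ⊥ := (hv0 0).mpr rfl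
      simp [coeff_one, hbot]
  | cons a t ih =>
    have ha : 0 ≤ v a := ht a (Multiset.mem_cons_self a t)
    have ht' : ∀ x ∈ t, 0 ≤ v x := fun x hx => ht x (Multiset.mem_cons_of_mem hx)
    rw [Multiset.map_cons, Multiset.prod_cons, Multiset.map_cons, Multiset.sum_cons,
      _root_.coeff_X_sub_C_mul]
    have hsle : (t.map v).sum ≤ v a + (t.map v).sum := le_add_of_nonneg_left ha
    have h2 : v (a * ((t.map fun a => X - C a).prod).coeff k) ≤ v a + (t.map v).sum := by
      rw [hvmul]; exact add_le_add_right (ih ht' k) _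
    refine (vaux_sub_le v hv0 hvmul hvadd _ _).trans (max_le ?_ h2)
    split
    · have hbot : v (0:K) = ⊥ := (hv0 0).mpr rfl
      simp [hbot]
    · exact (ih ht' (k - 1)).trans hsle

include hv0 hvmul hvadd in
theorem vaux_key (t : Multiset K) (ht : ∀ a ∈ t, v a < 0) (p : Polynomial K)
    (S : WithBot ℚ) (hSbot : S ≠ ⊥) (hp0 : v (p.coeff 0) = S) (hple : ∀ k, v (p.coeff k) ≤ S) :
    v (((t.map fun a => X - C a).prod * p).coeff (Multiset.card t)) = S
    ∧ (∀ k < Multiset.card t, v (((t.map fun a => X - C a).prod * p).coeff k) < S)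
    ∧ (∀ k, v (((t.map fun a => X - C a).prod * p).coeff k) ≤ S) := by
  induction t using Multiset.induction_on with
  | empty =>
    simp only [Multiset.map_zero, Multiset.prod_zero, one_mul, Multiset.card_zero]
    exact ⟨hp0, fun k hk => absurd hk (Nat.not_lt_zero k), hple⟩
  | cons a t ih =>
    have ha : v a < 0 := ht a (Multiset.mem_cons_self a t)
    obtain ⟨h1, h2, h3⟩ := ih (fun x hx => ht x (Multiset.mem_cons_of_mem hx))
    set q : Polynomial K := (t.map fun a => X - C a).prod * p with hq
    have hrw : ((a ::ₘ t).map fun a => X - C a).prod * p = (X - C a) * q := by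
      rw [Multiset.map_cons, Multiset.prod_cons, mul_assoc]
    rw [hrw, Multiset.card_cons]
    -- generic bound: v (a * q.coeff k) < S
    have hmul_lt : ∀ k, v (a * q.coeff k) < S := by
      intro k
      rw [hvmul]
      calc v a + v (q.coeff k) ≤ v a + S := add_le_add_right (h3 k) _
      _ < 0 + S := WithBot.add_lt_add_right hSbot ha
      _ = S := zero_add S
    refine ⟨?_, ?_, ?_⟩
    · rw [_root_.coeff_X_sub_C_mul, if_neg (Nat.succ_ne_zero _), Nat.succ_sub_one]
      rw [vaux_sub_eq v hv0 hvmul hvadd (by rw [h1]; exact hmul_lt _)]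
      exact h1
    · intro k hk
      rw [_root_.coeff_X_sub_C_mul]
      refine (vaux_sub_le v hv0 hvmul hvadd _ _).trans_lt (max_lt ?_ (hmul_lt k))
      cases k with
      | zero =>
        have hbot : v (0:K) = ⊥ := (hv0 0).mpr rfl
        simpa [hbot] using Ne.bot_lt hSbot
      | succ n =>
        rw [if_neg (Nat.succ_ne_zero _), Nat.succ_sub_one]
        exact h2 n (Nat.lt_of_succ_lt_succ hk)
    · intro k
      rw [_root_.coeff_X_sub_C_mul]
      refine (vaux_sub_le v hv0 hvmul hvadd _ _).trans (max_le ?_ (hmul_lt k).le)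
      split
      · have hbot : v (0:K) = ⊥ := (hv0 0).mpr rfl
        simp [hbot]
      · exact h3 _

end VAux2


noncomputable abbrev psiH : MvPolynomial (Fin 2) ℂ →ₐ[ℂ] Polynomial (Polynomial ℂ) :=
  MvPolynomial.aeval ![Polynomial.C Polynomial.X, Polynomial.X]

noncomputable abbrev chiH : Polynomial (Polynomial ℂ) →ₐ[ℂ] MvPolynomial (Fin 2) ℂ :=
  Polynomial.aevalTower (Polynomial.aeval (MvPolynomial.X 0)) (MvPolynomial.X 1)

theorem chi_psi (F : MvPolynomial (Fin 2) ℂ) : chiH (psiH F) = F := by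
  have h : chiH.comp psiH = AlgHom.id ℂ _ := by
    apply MvPolynomial.algHom_ext
    intro i
    fin_cases i <;> simp
  calc chiH (psiH F) = (chiH.comp psiH) F := rfl
  _ = F := by rw [h]; rfl

theorem X_dvd_of_coeffs (F : MvPolynomial (Fin 2) ℂ)
    (h : ∀ n, ((psiH F).coeff n).coeff 0 = 0) : MvPolynomial.X 0 ∣ F := by
  have hd : Polynomial.C Polynomial.X ∣ psiH F :=
    (Polynomial.C_dvd_iff_dvd_coeff _ _).mpr fun n => Polynomial.X_dvd_iff.mpr (h n)
  obtain ⟨u, hu⟩ := hd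
  refine ⟨chiH u, ?_⟩
  rw [← chi_psi F, hu, map_mul]
  congr 1
  simp


theorem theta_coeff (r : Polynomial ℂ) (n : ℤ) :
    (Polynomial.aeval (HahnSeries.single (1:ℤ) (1:ℂ)) r : LaurentSeries ℂ).coeff n
      = if 0 ≤ n then r.coeff n.toNat else 0 := by
  induction r using Polynomial.induction_on' with
  | add p q hp hq =>
    rw [map_add, HahnSeries.coeff_add, hp, hq]
    split <;> simp
  | monomial d c =>
    rw [Polynomial.aeval_monomial, HahnSeries.single_pow]
    simp only [one_pow, smul_eq_mul, nsmul_eq_mul, mul_one]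
    have halg : (algebraMap ℂ (LaurentSeries ℂ)) c = HahnSeries.single (0:ℤ) c := by
      rw [HahnSeries.algebraMap_apply', PowerSeries.algebraMap_apply, HahnSeries.ofPowerSeries_C,
        HahnSeries.C_apply]
      simp
    rw [halg, HahnSeries.single_mul_single, zero_add, mul_one, HahnSeries.coeff_single]
    rw [Polynomial.coeff_monomial]
    by_cases hn : n = (d : ℤ)
    · subst hn
      simp
    · rw [if_neg hn]
      split
    
      · rw [if_neg]
        omega
      · rfl



noncomputable abbrev thetaH : Polynomial ℂ →ₐ[ℂ] LaurentSeries ℂ :=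
  Polynomial.aeval (HahnSeries.single (1:ℤ) (1:ℂ))

theorem Q_eq (F : MvPolynomial (Fin 2) ℂ) :
    MvPolynomial.aeval ![Polynomial.C (HahnSeries.single (1:ℤ) (1:ℂ)), Polynomial.X] F
      = Polynomial.map (thetaH : Polynomial ℂ →+* LaurentSeries ℂ) (psiH F) := by
  have h : (Polynomial.mapAlgHom thetaH).comp psiH
      = MvPolynomial.aeval ![Polynomial.C (HahnSeries.single (1:ℤ) (1:ℂ)), Polynomial.X] := by
    apply MvPolynomial.algHom_ext
    intro i
    fin_cases i <;> simp
  rw [← h]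
  rfl

theorem G0_eq (F : MvPolynomial (Fin 2) ℂ) :
    ((psiH F).map (Polynomial.evalRingHom (0:ℂ))).coeff 0
      = MvPolynomial.eval (fun _ => (0:ℂ)) F := by
  have h : (Polynomial.constantCoeff.comp
        ((Polynomial.mapRingHom (Polynomial.evalRingHom (0:ℂ))).comp
          (psiH : MvPolynomial (Fin 2) ℂ →+* Polynomial (Polynomial ℂ))))
      = (MvPolynomial.eval (fun _ => (0:ℂ)) : MvPolynomial (Fin 2) ℂ →+* ℂ) := by
    apply MvPolynomial.ringHom_ext
    · intro c; simp
    · intro i; fin_cases i <;> simp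
  have := DFunLike.congr_fun h F
  simpa [Polynomial.constantCoeff_apply] using this

theorem evalzero_of_hFf (f : PowerSeries ℂ) (hf : PowerSeries.constantCoeff (R := ℂ) f = 0)
    (F : MvPolynomial (Fin 2) ℂ) (hFf : MvPolynomial.aeval ![PowerSeries.X, f] F = 0) :
    MvPolynomial.eval (fun _ => (0:ℂ)) F = 0 := by
  have h : ((PowerSeries.constantCoeff (R := ℂ)).comp
        ((MvPolynomial.aeval ![PowerSeries.X, f] : MvPolynomial (Fin 2) ℂ →ₐ[ℂ] PowerSeries ℂ)
          : MvPolynomial (Fin 2) ℂ →+* PowerSeries ℂ))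
      = (MvPolynomial.eval (fun _ => (0:ℂ)) : MvPolynomial (Fin 2) ℂ →+* ℂ) := by
    apply MvPolynomial.ringHom_ext
    · intro c; simp [PowerSeries.algebraMap_apply]
    · intro i; fin_cases i <;> simp [hf]
  have := DFunLike.congr_fun h F
  simp only [RingHom.coe_comp, Function.comp_apply] at this
  rw [← this]
  show PowerSeries.constantCoeff (R := ℂ) ((MvPolynomial.aeval ![PowerSeries.X, f]) F) = 0
  rw [hFf, map_zero]



theorem G1_eq (F : MvPolynomial (Fin 2) ℂ) :
    ((psiH F).map (Polynomial.evalRingHom (0:ℂ))).coeff 1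
      = MvPolynomial.eval (fun _ => (0:ℂ)) (MvPolynomial.pderiv 1 F) := by
  induction F using MvPolynomial.induction_on' with
  | add p q hp hq => simp [Polynomial.map_add, hp, hq]
  | monomial s a =>
    rw [MvPolynomial.pderiv_monomial, MvPolynomial.eval_monomial, MvPolynomial.aeval_monomial]
    rw [Finsupp.prod_fintype _ _ (fun i => pow_zero _), Fin.prod_univ_two]
    rw [Finsupp.prod_fintype _ _ (fun i => pow_zero _), Fin.prod_univ_two]
    simp only [Matrix.cons_val_zero, Matrix.cons_val_one, Matrix.head_cons]
    have h0 : ((s - Finsupp.single 1 1 : Fin 2 →₀ ℕ)) 0 = s 0 := by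
      rw [Finsupp.tsub_apply, Finsupp.single_apply]; simp
    have h1 : ((s - Finsupp.single 1 1 : Fin 2 →₀ ℕ)) 1 = s 1 - 1 := by
      rw [Finsupp.tsub_apply, Finsupp.single_apply]; simp
    rw [h0, h1]
    have halg : (algebraMap ℂ (Polynomial (Polynomial ℂ))) a = C (C a) := rfl
    rw [halg]
    rw [← mul_assoc, Polynomial.map_mul, Polynomial.map_mul, Polynomial.map_pow,
      Polynomial.map_C, Polynomial.map_C, Polynomial.map_pow, Polynomial.map_X]
    simp only [coe_evalRingHom, eval_C, eval_X]
    rw [← Polynomial.C_pow, ← Polynomial.C_mul, Polynomial.coeff_C_mul, Polynomial.coeff_X_pow]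
    by_cases h1s : s 1 = 1
    · rw [h1s, if_pos rfl]
      simp
    · rw [if_neg (by omega)]
      rcases Nat.eq_zero_or_pos (s 1) with h | h
      · simp [h]
      · rw [zero_pow (by omega : s 1 - 1 ≠ 0)]
        ring



open scoped Classical in
/-- let `f(t) ∈ tℂ[[t]]` and `F(x,y) ∈ ℂ[x,y]` with `x ∤ F` and
`F(t, f(t)) = 0`.  Then `F(1/z, y)`, as a polynomial in `y` over `ℂ((1/z))`
(modeled as Laurent series in `T = 1/z`), has exactly one root of strictly negative
valuation (counted with multiplicity) in the algebraic closure — for any valuation `v`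
extending `val = -order` — if and only if `∂F/∂y(0,0) ≠ 0`. -/
theorem one_negative_root_iff_nonsingular
    (f : PowerSeries ℂ) (hf : PowerSeries.constantCoeff (R := ℂ) f = 0)
    (F : MvPolynomial (Fin 2) ℂ)
    (hFx : ¬ (MvPolynomial.X 0 ∣ F))
    (hFf : MvPolynomial.aeval ![PowerSeries.X, f] F = 0)
    (v : AlgebraicClosure (LaurentSeries ℂ) → WithBot ℚ)
    (hv0 : ∀ x, v x = ⊥ ↔ x = 0)
    (hvmul : ∀ x y, v (x * y) = v x + v y)
    (hvadd : ∀ x y, v (x + y) ≤ max (v x) (v y))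
    (hvext : ∀ g : LaurentSeries ℂ, g ≠ 0 →
      v (algebraMap (LaurentSeries ℂ) (AlgebraicClosure (LaurentSeries ℂ)) g)
        = ((-(g.order) : ℚ) : WithBot ℚ)) :
    (Multiset.card
      (Multiset.filter (fun lam => v lam < 0)
        (Polynomial.roots
          (Polynomial.map (algebraMap (LaurentSeries ℂ) (AlgebraicClosure (LaurentSeries ℂ)))
            (MvPolynomial.aeval
              ![Polynomial.C (HahnSeries.single (1 : ℤ) (1 : ℂ)), Polynomial.X] F)))) = 1)
    ↔ MvPolynomial.eval (fun _ => (0 : ℂ)) (MvPolynomial.pderiv 1 F) ≠ 0 := by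
  set R : Polynomial (Polynomial ℂ) := psiH F with hR
  set G : Polynomial ℂ := R.map (Polynomial.evalRingHom (0:ℂ)) with hG
  set P : Polynomial (AlgebraicClosure (LaurentSeries ℂ)) :=
    Polynomial.map (algebraMap (LaurentSeries ℂ) (AlgebraicClosure (LaurentSeries ℂ)))
      (MvPolynomial.aeval
        ![Polynomial.C (HahnSeries.single (1 : ℤ) (1 : ℂ)), Polynomial.X] F) with hP
  -- coefficients of P
  have hPcoeff : ∀ k : ℕ, P.coeff k = algebraMap (LaurentSeries ℂ) (AlgebraicClosure (LaurentSeries ℂ)) (thetaH (R.coeff k)) := by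
    intro k
    rw [hR, hP, Q_eq F, Polynomial.coeff_map, Polynomial.coeff_map]
    rfl
  have hGcoeff : ∀ k : ℕ, G.coeff k = (thetaH (R.coeff k)).coeff (0:ℤ) := by
    intro k
    rw [hG, Polynomial.coeff_map, theta_coeff, if_pos le_rfl]
    simp [Polynomial.coeff_zero_eq_eval_zero]
  -- G facts
  have hG0 : G.coeff 0 = 0 := by
    rw [hG, G0_eq F]
    exact evalzero_of_hFf f hf F hFf
  have hGne : G ≠ 0 := by
    intro h
    apply hFx
    apply X_dvd_of_coeffs
    intro n
    have : G.coeff n = 0 := by rw [h, Polynomial.coeff_zero]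
    rw [hG, Polynomial.coeff_map] at this
    simpa [Polynomial.coeff_zero_eq_eval_zero] using this
  set μ : ℕ := G.natTrailingDegree with hμdef
  have hGμ : G.coeff μ ≠ 0 := Polynomial.trailingCoeff_nonzero_iff_nonzero.mpr hGne
  have hμ0 : μ ≠ 0 := fun h => hGμ (by rw [h, hG0])
  -- order bounds
  have horder : ∀ k : ℕ, thetaH (R.coeff k) ≠ 0 → 0 ≤ (thetaH (R.coeff k)).order := by
    intro k hk
    by_contra hlt
    push_neg at hlt
    have h1 : (thetaH (R.coeff k)).coeff (thetaH (R.coeff k)).order ≠ 0 := fun h => hk (HahnSeries.coeff_order_eq_zero.mp h)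
    rw [theta_coeff, if_neg (not_le.mpr hlt)] at h1
    exact h1 rfl
  have h3 : ∀ k : ℕ, v (P.coeff k) ≤ 0 := by
    intro k
    rw [hPcoeff k]
    by_cases hk : thetaH (R.coeff k) = 0
    · rw [hk, map_zero, (hv0 0).mpr rfl]
      exact bot_le
    · rw [hvext _ hk]
      have h := horder k hk
      have h' : (-(((thetaH (R.coeff k)).order : ℚ))) ≤ (0:ℚ) :=
        neg_nonpos.mpr (by exact_mod_cast h)
      exact_mod_cast h'
  have hvz : ∀ k : ℕ, v (P.coeff k) = 0 ↔ G.coeff k ≠ 0 := by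
    intro k
    rw [hPcoeff k, hGcoeff k]
    constructor
    · intro hvk
      have hk : thetaH (R.coeff k) ≠ 0 := by
        intro h
        rw [h, map_zero, (hv0 0).mpr rfl] at hvk
        exact absurd hvk (by simp)
      have h1 := hvext _ hk
      rw [hvk] at h1
      have h2 : (thetaH (R.coeff k)).order = 0 := by
        have h2' : (-(((thetaH (R.coeff k)).order : ℚ)) : ℚ) = 0 := by exact_mod_cast h1.symm
        have h2'' : (((thetaH (R.coeff k)).order : ℚ)) = 0 := by linarith
        exact_mod_cast h2''
      have : (thetaH (R.coeff k)).coeff (thetaH (R.coeff k)).order ≠ 0 := fun h => hk (HahnSeries.coeff_order_eq_zero.mp h)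
      rwa [h2] at this
    · intro hne
      have hk : thetaH (R.coeff k) ≠ 0 := fun h => hne (by rw [h]; rfl)
      have hle : (thetaH (R.coeff k)).order ≤ 0 := HahnSeries.order_le_of_coeff_ne_zero hne
      have hord : (thetaH (R.coeff k)).order = 0 := le_antisymm hle (horder k hk)
      rw [hvext _ hk, hord]
      norm_num
  -- P ≠ 0 and factorization
  have hPne : P ≠ 0 := by
    intro h
    have : v (P.coeff μ) = 0 := (hvz μ).mpr hGμ
    rw [h, Polynomial.coeff_zero, (hv0 0).mpr rfl] at this
    exact absurd this (by simp)
  have hroots : Multiset.card P.roots = P.natDegree :=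
    (Polynomial.splits_iff_card_roots).mp (IsAlgClosed.splits P)
  have hfact := Polynomial.C_leadingCoeff_mul_prod_multiset_X_sub_C hroots
  set c := P.leadingCoeff with hc
  have hcne : c ≠ 0 := Polynomial.leadingCoeff_ne_zero.mpr hPne
  set s := P.roots with hs
  set neg := s.filter (fun lam => v lam < 0) with hneg
  set t0 := s.filter (fun lam => ¬ v lam < 0) with ht0
  have hsplit : neg + t0 = s := Multiset.filter_add_not _ s
  have hW : P = (neg.map fun a => Polynomial.X - Polynomial.C a).prod
      * (Polynomial.C c * (t0.map fun a => Polynomial.X - Polynomial.C a).prod) := by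
    rw [← hfact, ← hsplit, Multiset.map_add, Multiset.prod_add]
    ring
  set S : WithBot ℚ := (t0.map v).sum with hSdef
  have hS0 : 0 ≤ S := by
    apply wbq_sum_nonneg
    intro x hx
    obtain ⟨a, ha, rfl⟩ := Multiset.mem_map.mp hx
    exact not_lt.mp (Multiset.mem_filter.mp ha).2
  have hSbot : S ≠ ⊥ := fun h => by rw [h] at hS0; exact absurd hS0 (by simp)
  have hvcbot : v c ≠ ⊥ := fun h => hcne ((hv0 c).mp h)
  have hS'bot : v c + S ≠ ⊥ := WithBot.add_ne_bot.mpr ⟨hvcbot, hSbot⟩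
  have hq0 : v ((Polynomial.C c * (t0.map fun a => Polynomial.X - Polynomial.C a).prod).coeff 0)
      = v c + S := by
    rw [Polynomial.coeff_C_mul, hvmul, coeff_zero_W, vaux_prod v hv0 hvmul, Multiset.map_map]
    congr 1
    rw [hSdef]
    congr 1
    exact Multiset.map_congr rfl fun a _ => vaux_neg v hv0 hvmul a
  have hqle : ∀ k, v ((Polynomial.C c
      * (t0.map fun a => Polynomial.X - Polynomial.C a).prod).coeff k) ≤ v c + S := by
    intro k
    rw [Polynomial.coeff_C_mul, hvmul]
    exact add_le_add_right (vaux_coeff_prod_le v hv0 hvmul hvadd t0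
      (fun a ha => not_lt.mp (Multiset.mem_filter.mp ha).2) k) _
  obtain ⟨hm1, hm2, hm3⟩ := vaux_key v hv0 hvmul hvadd neg
    (fun a ha => (Multiset.mem_filter.mp ha).2)
    (Polynomial.C c * (t0.map fun a => Polynomial.X - Polynomial.C a).prod)
    (v c + S) hS'bot hq0 hqle
  rw [← hW] at hm1 hm2 hm3
  set m : ℕ := Multiset.card neg with hm
  -- v c + S = 0
  have hS'le : v c + S ≤ 0 := hm1 ▸ h3 m
  have h0le : (0 : WithBot ℚ) ≤ v c + S := by
    have := hm3 μ
    rwa [(hvz μ).mpr hGμ] at this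
  have hS'0 : v c + S = 0 := le_antisymm hS'le h0le
  -- m = μ
  have hmμ : m = μ := by
    rcases lt_trichotomy m μ with h | h | h
    · exfalso
      have hzero : G.coeff m = 0 := Polynomial.coeff_eq_zero_of_lt_natTrailingDegree h
      have : v (P.coeff m) ≠ 0 := fun hv => (by rw [hvz m] at hv; exact hv hzero)
      exact this (by rw [hm1, hS'0])
    · exact h
    · exfalso
      have := hm2 μ h
      rw [(hvz μ).mpr hGμ, hS'0] at this
      exact absurd this (lt_irrefl _)
  -- conclude
  rw [← G1_eq F, ← hG]
  show m = 1 ↔ G.coeff 1 ≠ 0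
  rw [hmμ]
  constructor
  · intro h
    rwa [← h]
  · intro h
    have h1 : μ ≤ 1 := Polynomial.natTrailingDegree_le_of_ne_zero h
    omega
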